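/- Let p,q ≥ 1, n = p+q, and let λ₁,...,λ_p, μ₁,...,μ_q be real numbers with λ_i > μ_j for all i,j. Let w₁, w₂ ∈ ℂⁿ satisfy ⟨w₁,w₁⟩ = ⟨w₂,w₂⟩ = 1 and ⟨w₂,w₁⟩ = 0. Let D = diag(e^{λ₁},...,e^{λ_p}, e^{μ₁},...,e^{μ_q}) and set v₁ = D·w₁, v₂ = D·w₂. Then ‖v₂‖²·‖v₁‖² > |⟨v₂,v₁⟩|². In particular v₂ − ⟨v₂, v₁/‖v₁‖⟩·(v₁/‖v₁‖) is timelike. -/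

import Mathlib

open Matrix Complex

noncomputable section

/-- The signature matrix J_{p,q} = diag(1,...,1,-1,...,-1). -/
def Jpq (p q : ℕ) : Matrix (Fin (p + q)) (Fin (p + q)) ℂ :=
  Matrix.diagonal (fun i => if (i : ℕ) < p then 1 else -1)

/-- The group SU(p,q) as a subset of matrices: det = 1 and g* J g = J. -/
def SUpq (p q : ℕ) : Set (Matrix (Fin (p + q)) (Fin (p + q)) ℂ) :=
  {g | g.det = 1 ∧ gᴴ * Jpq p q * g = Jpq p q}

/-- The involution M† = J M* J. -/
def dag (p q : ℕ) (M : Matrix (Fin (p + q)) (Fin (p + q)) ℂ) :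
    Matrix (Fin (p + q)) (Fin (p + q)) ℂ :=
  Jpq p q * Mᴴ * Jpq p q

/-- Q = {s ∈ SL(n,ℂ) : s† = s}. -/
def Qset (p q : ℕ) : Set (Matrix (Fin (p + q)) (Fin (p + q)) ℂ) :=
  {s | s.det = 1 ∧ dag p q s = s}

/-- An admissible traceless real diagonal: entries l, trace zero, and
every entry with index < p strictly exceeds every entry with index ≥ p. -/
def IsAdmissibleDiag (p q : ℕ) (l : Fin (p + q) → ℝ) : Prop :=
  (∑ i, l i = 0) ∧ ∀ i j : Fin (p + q), (i : ℕ) < p → p ≤ (j : ℕ) → l j < l i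

/-- exp of a real diagonal matrix, as a complex matrix. -/
def expDiag (p q : ℕ) (l : Fin (p + q) → ℝ) : Matrix (Fin (p + q)) (Fin (p + q)) ℂ :=
  Matrix.diagonal (fun i => (Real.exp (l i) : ℂ))

/-- Admissible elements of Q: G₀-conjugates of exponentials of admissible diagonals. -/
def IsAdmissibleQ (p q : ℕ) (s : Matrix (Fin (p + q)) (Fin (p + q)) ℂ) : Prop :=
  ∃ g ∈ SUpq p q, ∃ l : Fin (p + q) → ℝ, IsAdmissibleDiag p q l ∧
    s = g⁻¹ * expDiag p q l * g

/-- The group AN: upper triangular, determinant 1, positive real diagonal entries. -/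
def ANset (p q : ℕ) : Set (Matrix (Fin (p + q)) (Fin (p + q)) ℂ) :=
  {b | b.det = 1 ∧ (∀ i j : Fin (p + q), j < i → b i j = 0) ∧
    ∀ i, 0 < (b i i).re ∧ (b i i).im = 0}

/-- Admissible elements of AN: elements whose symmetrization b†b is admissible in Q. -/
def IsAdmissibleAN (p q : ℕ) (b : Matrix (Fin (p + q)) (Fin (p + q)) ℂ) : Prop :=
  b ∈ ANset p q ∧ IsAdmissibleQ p q (dag p q b * b)

/-- The sesquilinear pairing ⟨x,y⟩ = Σ_{i<p} x_i conj(y_i) − Σ_{i≥p} x_i conj(y_i). -/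
def pairingC (p q : ℕ) (x y : Fin (p + q) → ℂ) : ℂ :=
  ∑ i : Fin (p + q), (if (i : ℕ) < p then 1 else -1) * (x i * (starRingEnd ℂ) (y i))

/-- The (real) square norm ‖x‖² = ⟨x,x⟩. -/
def pnormSq (p q : ℕ) (x : Fin (p + q) → ℂ) : ℝ :=
  ∑ i : Fin (p + q), (if (i : ℕ) < p then 1 else -1) * Complex.normSq (x i)

/-- A vector is timelike if ‖x‖² > 0. -/
def Timelike (p q : ℕ) (x : Fin (p + q) → ℂ) : Prop :=
  0 < pnormSq p q x

private lemma pairingC_sub_left (p q : ℕ) (x y z : Fin (p+q) → ℂ) :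
    pairingC p q (x - y) z = pairingC p q x z - pairingC p q y z := by
  simp only [pairingC, Pi.sub_apply, ← Finset.sum_sub_distrib]
  exact Finset.sum_congr rfl fun i _ => by ring

private lemma pairingC_sub_right (p q : ℕ) (x y z : Fin (p+q) → ℂ) :
    pairingC p q x (y - z) = pairingC p q x y - pairingC p q x z := by
  simp only [pairingC, Pi.sub_apply, _root_.map_sub, ← Finset.sum_sub_distrib]
  exact Finset.sum_congr rfl fun i _ => by ring

private lemma pairingC_smul_left (p q : ℕ) (c : ℂ) (x y : Fin (p+q) → ℂ) :
    pairingC p q (c • x) y = c * pairingC p q x y := by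
  simp only [pairingC, Pi.smul_apply, smul_eq_mul, Finset.mul_sum]
  exact Finset.sum_congr rfl fun i _ => by ring

private lemma pairingC_smul_right (p q : ℕ) (c : ℂ) (x y : Fin (p+q) → ℂ) :
    pairingC p q x (c • y) = (starRingEnd ℂ) c * pairingC p q x y := by
  simp only [pairingC, Pi.smul_apply, smul_eq_mul, _root_.map_mul, Finset.mul_sum]
  exact Finset.sum_congr rfl fun i _ => by ring

private lemma pairingC_conj (p q : ℕ) (x y : Fin (p+q) → ℂ) :
    (starRingEnd ℂ) (pairingC p q x y) = pairingC p q y x := by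
  simp only [pairingC, _root_.map_sum, _root_.map_mul, Complex.conj_conj,
    apply_ite (starRingEnd ℂ), _root_.map_one, _root_.map_neg]
  exact Finset.sum_congr rfl fun i _ => by ring

private lemma pnormSq_cast (p q : ℕ) (x : Fin (p+q) → ℂ) :
    ((pnormSq p q x : ℝ) : ℂ) = pairingC p q x x := by
  rw [pnormSq, pairingC]
  push_cast [apply_ite (fun r : ℝ => (r : ℂ))]
  exact Finset.sum_congr rfl fun i _ => by rw [Complex.mul_conj]

/-- for pseudo-orthonormal w₁, w₂ and D = exp of an admissible diagonal,
with v₁ = D w₁, v₂ = D w₂ we have ‖v₂‖²‖v₁‖² > |⟨v₂,v₁⟩|²; in particular the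
Gram–Schmidt remainder v₂ − ⟨v₂, v₁/‖v₁‖⟩ (v₁/‖v₁‖) is timelike. -/
theorem gram_schmidt_step_timelike
    (p q : ℕ) (hp : 1 ≤ p) (hq : 1 ≤ q)
    (l : Fin (p + q) → ℝ)
    (hl : ∀ i j : Fin (p + q), (i : ℕ) < p → p ≤ (j : ℕ) → l j < l i)
    (w₁ w₂ : Fin (p + q) → ℂ)
    (hw₁ : pairingC p q w₁ w₁ = 1) (hw₂ : pairingC p q w₂ w₂ = 1)
    (hw12 : pairingC p q w₂ w₁ = 0)
    (v₁ v₂ : Fin (p + q) → ℂ)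
    (hv₁ : v₁ = (expDiag p q l).mulVec w₁) (hv₂ : v₂ = (expDiag p q l).mulVec w₂) :
    Complex.normSq (pairingC p q v₂ v₁) < pnormSq p q v₂ * pnormSq p q v₁ ∧
    Timelike p q (v₂ - (pairingC p q v₂ ((Real.sqrt (pnormSq p q v₁) : ℂ)⁻¹ • v₁)) •
      ((Real.sqrt (pnormSq p q v₁) : ℂ)⁻¹ • v₁)) := by
  -- choose t = min of the top-block exponentials
  obtain ⟨i₀, hi₀mem, hi₀min⟩ := Finset.exists_min_image
    (Finset.univ.filter fun i : Fin (p+q) => (i:ℕ) < p) l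
    ⟨⟨0, by omega⟩, by simp only [Finset.mem_filter, Finset.mem_univ, true_and]; omega⟩
  have hi₀p : (i₀ : ℕ) < p := by simpa using hi₀mem
  set t : ℝ := Real.exp (2 * l i₀) with ht
  have ht0 : 0 < t := Real.exp_pos _
  set d : Fin (p+q) → ℝ :=
    fun i => (if (i:ℕ) < p then (1:ℝ) else -1) * (Real.exp (2 * l i) - t) with hd
  have hd0 : ∀ i, 0 ≤ d i := by
    intro i
    by_cases h : (i:ℕ) < p
    · have h1 : t ≤ Real.exp (2 * l i) := by
        apply Real.exp_le_exp.2
        have := hi₀min i (by simp [h]); linarith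
      simp only [hd, if_pos h]; linarith
    · have h2 : Real.exp (2 * l i) < t := by
        apply Real.exp_lt_exp.2
        have := hl i₀ i hi₀p (le_of_not_gt h); linarith
      simp only [hd, if_neg h]; nlinarith
  have hkey : ∀ i : Fin (p+q), (if (i:ℕ) < p then (1:ℝ) else -1) * Real.exp (2 * l i)
      = (if (i:ℕ) < p then (1:ℝ) else -1) * t + d i := by
    intro i; by_cases h : (i:ℕ) < p <;> simp only [hd, if_pos, if_neg, h] <;> ring
  have hexp2 : ∀ i : Fin (p+q), Real.exp (l i) * Real.exp (l i) = Real.exp (2 * l i) := by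
    intro i; rw [two_mul, Real.exp_add]
  -- norms of w₁, w₂
  have hw₁R : pnormSq p q w₁ = 1 := by
    have h := pnormSq_cast p q w₁; rw [hw₁] at h; exact_mod_cast h
  have hw₂R : pnormSq p q w₂ = 1 := by
    have h := pnormSq_cast p q w₂; rw [hw₂] at h; exact_mod_cast h
  -- pnormSq of transformed vectors
  have hpn : ∀ (w v : Fin (p+q) → ℂ), v = (expDiag p q l).mulVec w →
      pnormSq p q v = t * pnormSq p q w + ∑ i, d i * Complex.normSq (w i) := by
    intro w v hv
    rw [pnormSq, pnormSq, Finset.mul_sum, ← Finset.sum_add_distrib]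
    refine Finset.sum_congr rfl fun i _ => ?_
    have hvi : Complex.normSq (v i) = Real.exp (2 * l i) * Complex.normSq (w i) := by
      rw [hv, expDiag, Matrix.mulVec_diagonal, Complex.normSq_mul, Complex.normSq_ofReal,
        hexp2 i]
    rw [hvi, ← mul_assoc, hkey i]; ring
  set P₁ := ∑ i, d i * Complex.normSq (w₁ i) with hP₁
  set P₂ := ∑ i, d i * Complex.normSq (w₂ i) with hP₂
  have hP₁0 : 0 ≤ P₁ := Finset.sum_nonneg fun i _ => mul_nonneg (hd0 i) (Complex.normSq_nonneg _)
  have hP₂0 : 0 ≤ P₂ := Finset.sum_nonneg fun i _ => mul_nonneg (hd0 i) (Complex.normSq_nonneg _)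
  have hN₁ : pnormSq p q v₁ = t + P₁ := by rw [hpn w₁ v₁ hv₁, hw₁R, mul_one]
  have hN₂ : pnormSq p q v₂ = t + P₂ := by rw [hpn w₂ v₂ hv₂, hw₂R, mul_one]
  -- the pairing of transformed vectors
  have hPform : pairingC p q v₂ v₁ = ∑ i, (d i : ℂ) * (w₂ i * (starRingEnd ℂ) (w₁ i)) := by
    have hterm : ∀ i : Fin (p+q),
        (if (i:ℕ) < p then (1:ℂ) else -1) * (v₂ i * (starRingEnd ℂ) (v₁ i))
        = (t : ℂ) * ((if (i:ℕ) < p then (1:ℂ) else -1) * (w₂ i * (starRingEnd ℂ) (w₁ i)))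
          + (d i : ℂ) * (w₂ i * (starRingEnd ℂ) (w₁ i)) := by
      intro i
      have hvi2 : v₂ i = (Real.exp (l i) : ℂ) * w₂ i := by
        rw [hv₂, expDiag, Matrix.mulVec_diagonal]
      have hvi1 : v₁ i = (Real.exp (l i) : ℂ) * w₁ i := by
        rw [hv₁, expDiag, Matrix.mulVec_diagonal]
      have hk : ((if (i:ℕ) < p then (1:ℝ) else -1) * Real.exp (2 * l i) : ℝ)
          = ((if (i:ℕ) < p then (1:ℝ) else -1) * t + d i : ℝ) := hkey i
      have hkC := congrArg (fun r : ℝ => (r : ℂ)) hk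
      simp only [Complex.ofReal_mul, Complex.ofReal_add, apply_ite (fun r : ℝ => (r : ℂ)),
        Complex.ofReal_one, Complex.ofReal_neg] at hkC
      rw [hvi2, hvi1, _root_.map_mul, Complex.conj_ofReal]
      have he : ((Real.exp (l i) : ℂ)) * ((Real.exp (l i) : ℂ)) = ((Real.exp (2 * l i) : ℝ) : ℂ) := by
        rw [← Complex.ofReal_mul, hexp2 i]
      calc (if (i:ℕ) < p then (1:ℂ) else -1) *
            ((Real.exp (l i) : ℂ) * w₂ i * ((Real.exp (l i) : ℂ) * (starRingEnd ℂ) (w₁ i)))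
          = ((if (i:ℕ) < p then (1:ℂ) else -1) * ((Real.exp (2 * l i) : ℝ) : ℂ))
            * (w₂ i * (starRingEnd ℂ) (w₁ i)) := by rw [← he]; ring
        _ = ((if (i:ℕ) < p then (1:ℂ) else -1) * (t:ℂ) + (d i : ℂ))
            * (w₂ i * (starRingEnd ℂ) (w₁ i)) := by rw [hkC]
        _ = _ := by ring
    rw [pairingC]
    rw [Finset.sum_congr rfl fun i _ => hterm i, Finset.sum_add_distrib, ← Finset.mul_sum,
      ← pairingC, hw12, mul_zero, zero_add]
  -- triangle inequality
  have habs : ‖pairingC p q v₂ v₁‖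
      ≤ ∑ i, d i * (‖w₂ i‖ * ‖w₁ i‖) := by
    rw [hPform]
    calc ‖∑ i, (d i : ℂ) * (w₂ i * (starRingEnd ℂ) (w₁ i))‖
        = ‖∑ i, (d i : ℂ) * (w₂ i * (starRingEnd ℂ) (w₁ i))‖ := rfl
      _ ≤ ∑ i, ‖(d i : ℂ) * (w₂ i * (starRingEnd ℂ) (w₁ i))‖ := norm_sum_le _ _
      _ = ∑ i, d i * (‖w₂ i‖ * ‖w₁ i‖) :=
          Finset.sum_congr rfl fun i _ => by
            rw [norm_mul, norm_mul, Complex.norm_conj, Complex.norm_real,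
              Real.norm_eq_abs,
              _root_.abs_of_nonneg (hd0 i)]
  have habs0 : 0 ≤ ∑ i, d i * (‖w₂ i‖ * ‖w₁ i‖) :=
    le_trans (norm_nonneg _) habs
  -- Cauchy-Schwarz
  have hCS := Finset.sum_mul_sq_le_sq_mul_sq Finset.univ
      (fun i => Real.sqrt (d i) * ‖w₂ i‖)
      (fun i => Real.sqrt (d i) * ‖w₁ i‖)
  have e1 : ∑ i, (Real.sqrt (d i) * ‖w₂ i‖) * (Real.sqrt (d i) * ‖w₁ i‖)
      = ∑ i, d i * (‖w₂ i‖ * ‖w₁ i‖) :=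
    Finset.sum_congr rfl fun i _ => by
      linear_combination (‖w₂ i‖ * ‖w₁ i‖) * Real.mul_self_sqrt (hd0 i)
  have e2 : ∑ i, (Real.sqrt (d i) * ‖w₂ i‖)^2 = P₂ :=
    Finset.sum_congr rfl fun i _ => by rw [mul_pow, Real.sq_sqrt (hd0 i), Complex.sq_norm]
  have e3 : ∑ i, (Real.sqrt (d i) * ‖w₁ i‖)^2 = P₁ :=
    Finset.sum_congr rfl fun i _ => by rw [mul_pow, Real.sq_sqrt (hd0 i), Complex.sq_norm]
  rw [e1, e2, e3] at hCS
  have habs2 : Complex.normSq (pairingC p q v₂ v₁)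
      ≤ (∑ i, d i * (‖w₂ i‖ * ‖w₁ i‖))^2 := by
    rw [← Complex.sq_norm]
    exact pow_le_pow_left₀ (norm_nonneg _) habs 2
  have goal1 : Complex.normSq (pairingC p q v₂ v₁) < pnormSq p q v₂ * pnormSq p q v₁ := by
    rw [hN₁, hN₂]; nlinarith [habs2, hCS, hP₁0, hP₂0, ht0]
  refine ⟨goal1, ?_⟩
  -- part 2
  have hN₁pos : 0 < pnormSq p q v₁ := by rw [hN₁]; nlinarith
  set N₁ := pnormSq p q v₁ with hN₁def
  set N₂ := pnormSq p q v₂ with hN₂def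
  set P := pairingC p q v₂ v₁ with hPdef
  set s := Real.sqrt N₁ with hs
  have hs0 : 0 < s := Real.sqrt_pos.2 hN₁pos
  have hs2 : (s : ℂ) * (s : ℂ) = (N₁ : ℂ) := by
    rw [← Complex.ofReal_mul, Real.mul_self_sqrt hN₁pos.le]
  have hsne : (s : ℂ) ≠ 0 := Complex.ofReal_ne_zero.2 hs0.ne'
  have hN₁ne : (N₁ : ℂ) ≠ 0 := Complex.ofReal_ne_zero.2 hN₁pos.ne'
  have hcconj : (starRingEnd ℂ) ((s : ℂ)⁻¹) = (s : ℂ)⁻¹ := by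
    rw [← Complex.ofReal_inv, Complex.conj_ofReal]
  have hc : pairingC p q v₂ ((s:ℂ)⁻¹ • v₁) = (s:ℂ)⁻¹ * P := by
    rw [pairingC_smul_right, hcconj]
  unfold Timelike
  rw [hc, smul_smul]
  set a : ℂ := (s:ℂ)⁻¹ * P * (s:ℂ)⁻¹ with ha
  have hconjP : pairingC p q v₁ v₂ = (starRingEnd ℂ) P := (pairingC_conj p q v₂ v₁).symm
  have hval : pairingC p q (v₂ - a • v₁) (v₂ - a • v₁)
      = ((N₂ - Complex.normSq P / N₁ : ℝ) : ℂ) := by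
    rw [pairingC_sub_left, pairingC_sub_right, pairingC_sub_right, pairingC_smul_left,
      pairingC_smul_left, pairingC_smul_right, pairingC_smul_right, hconjP,
      ← pnormSq_cast, ← pnormSq_cast, ← hN₁def, ← hN₂def, ← hPdef, ha]
    have hmc : P * (starRingEnd ℂ) P = (Complex.normSq P : ℂ) := Complex.mul_conj P
    rw [_root_.map_mul, _root_.map_mul, hcconj, Complex.ofReal_sub, Complex.ofReal_div,
      ← hmc, ← hs2]
    field_simp
    ring
  have hcast : ((pnormSq p q (v₂ - a • v₁) : ℝ) : ℂ) = ((N₂ - Complex.normSq P / N₁ : ℝ) : ℂ) :=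
    (pnormSq_cast p q _).trans hval
  have hr : pnormSq p q (v₂ - a • v₁) = N₂ - Complex.normSq P / N₁ := by exact_mod_cast hcast
  rw [hr, sub_pos, div_lt_iff₀ hN₁pos]
  exact goal1
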